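/- If P is a subset of [0,∞]^I (I countable) such that for every a ∈ I there exists u ∈ P with u_a > 0, and for every a ∈ I there exists m ∈ ℝ≥0 such that u_a ≤ m for all u ∈ P, then the orthogonal P⊥ = {u' : ∀ u ∈ P, ∑_i u_i u'_i ≤ 1} is contained in [0,∞)^I and satisfies the same two properties. -/
import Mathlib


open scoped ENNReal NNReal

noncomputable section

def dot {I : Type*} (u v : I → ℝ≥0∞) : ℝ≥0∞ := ∑' i, u i * v i

def orth {I : Type*} (P : Set (I → ℝ≥0∞)) : Set (I → ℝ≥0∞) :=
  {v | ∀ u ∈ P, dot u v ≤ 1}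

theorem stmt0 {I : Type*} [Countable I] (P : Set (I → ℝ≥0∞))
    (h1 : ∀ a : I, ∃ u ∈ P, 0 < u a)
    (h2 : ∀ a : I, ∃ m : ℝ≥0, ∀ u ∈ P, u a ≤ m) :
    (∀ u' ∈ orth P, ∀ a : I, u' a ≠ ⊤) ∧
    (∀ a : I, ∃ u' ∈ orth P, 0 < u' a) ∧
    (∀ a : I, ∃ m : ℝ≥0, ∀ u' ∈ orth P, u' a ≤ m) := by
  classical
  have key : ∀ (u u' : I → ℝ≥0∞) (a : I), u a * u' a ≤ dot u u' := by
    intro u u' a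
    exact ENNReal.le_tsum a
  refine ⟨?_, ?_, ?_⟩
  · intro u' hu' a htop
    obtain ⟨u, huP, hua⟩ := h1 a
    have h := (key u u' a).trans (hu' u huP)
    rw [htop, ENNReal.mul_top hua.ne'] at h
    exact absurd h (by simp)
  · intro a
    obtain ⟨m, hm⟩ := h2 a
    obtain ⟨u, huP, hua⟩ := h1 a
    have hmpos : (0 : ℝ≥0∞) < m := lt_of_lt_of_le hua (hm u huP)
    refine ⟨fun i => if i = a then (m : ℝ≥0∞)⁻¹ else 0, ?_, ?_⟩
    · intro v hvP
      have : dot v (fun i => if i = a then (m : ℝ≥0∞)⁻¹ else 0)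
          = v a * (m : ℝ≥0∞)⁻¹ := by
        unfold dot
        rw [tsum_eq_single a]
        · simp
        · intro b hb; simp [hb]
      rw [this]
      calc v a * (m : ℝ≥0∞)⁻¹ ≤ m * (m : ℝ≥0∞)⁻¹ :=
            mul_le_mul_left (hm v hvP) _
        _ ≤ 1 := ENNReal.mul_inv_le_one _
    · simp only [if_pos rfl]
      exact ENNReal.inv_pos.mpr ENNReal.coe_ne_top
  · intro a
    obtain ⟨u, huP, hua⟩ := h1 a
    obtain ⟨m, hm⟩ := h2 a
    have hfin : u a ≠ ⊤ := ne_top_of_le_ne_top (by simp) (hm u huP)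
    refine ⟨(u a)⁻¹.toNNReal, ?_⟩
    intro u' hu'
    have h := (key u u' a).trans (hu' u huP)
    have : u' a ≤ (u a)⁻¹ := by
      rw [mul_comm, ← ENNReal.le_div_iff_mul_le (Or.inl hua.ne') (Or.inl hfin),
        one_div] at h
      exact h
    calc u' a ≤ (u a)⁻¹ := this
      _ = ((u a)⁻¹.toNNReal : ℝ≥0∞) := by
          rw [ENNReal.coe_toNNReal (by simp [hua.ne'])]
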